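/- Let F(t) and G(t) be univariate real polynomials, f(x,y) = x·F(xy), g(x,y) = y·G(xy). If the polynomial F(t)·G(t) has a nonzero real root, then the Jacobian determinant Jac(f,g) attains both positive and negative values on ℝ². -/

import Mathlib

open MvPolynomial

noncomputable def Jac (f g : MvPolynomial (Fin 2) ℝ) : MvPolynomial (Fin 2) ℝ :=
  pderiv 0 f * pderiv 1 g - pderiv 1 f * pderiv 0 g

lemma deriv_signs_aux (R : Polynomial ℝ) (hR : R ≠ 0) {a b : ℝ} (hab : a < b)
    (ha : R.eval a = 0) (hb : R.eval b = 0)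
    (hmono : Monotone (fun t => R.eval t) ∨ Antitone (fun t => R.eval t)) : False := by
  have hroots : Set.Icc a b ⊆ {t | R.IsRoot t} := by
    intro t ht
    rcases hmono with h | h
    · have h1 := h ht.1
      have h2 := h ht.2
      simp only at h1 h2
      simp only [Polynomial.IsRoot, Set.mem_setOf_eq]
      linarith
    · have h1 := h ht.1
      have h2 := h ht.2
      simp only at h1 h2
      simp only [Polynomial.IsRoot, Set.mem_setOf_eq]
      linarith
  exact hR (R.eq_zero_of_infinite_isRoot ((Set.Icc_infinite hab).mono hroots))

lemma deriv_signs (R : Polynomial ℝ) (hR : R ≠ 0) {a b : ℝ} (hab : a ≠ b)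
    (ha : R.eval a = 0) (hb : R.eval b = 0) :
    (∃ t, 0 < R.derivative.eval t) ∧ (∃ t, R.derivative.eval t < 0) := by
  wlog h : a < b generalizing a b
  · exact this hab.symm hb ha (lt_of_le_of_ne (not_lt.mp h) hab.symm)
  constructor
  · by_contra hc
    push_neg at hc
    have : Antitone (fun t => R.eval t) :=
      antitone_of_deriv_nonpos (R.differentiable) (fun x => by
        rw [Polynomial.deriv]; exact hc x)
    exact deriv_signs_aux R hR h ha hb (Or.inr this)
  · by_contra hc
    push_neg at hc
    have : Monotone (fun t => R.eval t) :=
      monotone_of_deriv_nonneg (R.differentiable) (fun x => by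
        rw [Polynomial.deriv]; exact hc x)
    exact deriv_signs_aux R hR h ha hb (Or.inl this)

theorem jac_changes_sign_of_root (F G : Polynomial ℝ)
    (f g : MvPolynomial (Fin 2) ℝ)
    (hf : f = X 0 * Polynomial.aeval (X 0 * X 1 : MvPolynomial (Fin 2) ℝ) F)
    (hg : g = X 1 * Polynomial.aeval (X 0 * X 1 : MvPolynomial (Fin 2) ℝ) G)
    (hFG : F * G ≠ 0)
    (hroot : ∃ t : ℝ, t ≠ 0 ∧ (F * G).eval t = 0) :
    (∃ p : Fin 2 → ℝ, 0 < eval p (Jac f g)) ∧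
    (∃ q : Fin 2 → ℝ, eval q (Jac f g) < 0) := by
  obtain ⟨t₀, ht₀, hroot⟩ := hroot
  set u : MvPolynomial (Fin 2) ℝ := X 0 * X 1 with hu
  set R : Polynomial ℝ := Polynomial.X * (F * G) with hRdef
  have hR : R ≠ 0 := mul_ne_zero Polynomial.X_ne_zero hFG
  -- key identity: Jac f g = aeval u (derivative R)
  have hd0u : pderiv (0 : Fin 2) u = X 1 := by simp [hu]
  have hd1u : pderiv (1 : Fin 2) u = X 0 := by simp [hu]
  have key : Jac f g = Polynomial.aeval u (Polynomial.derivative R) := by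
    have c0F := (pderiv (0 : Fin 2)).comp_aeval_eq (A := MvPolynomial (Fin 2) ℝ) (a := u) F
    have c1F := (pderiv (1 : Fin 2)).comp_aeval_eq (A := MvPolynomial (Fin 2) ℝ) (a := u) F
    have c0G := (pderiv (0 : Fin 2)).comp_aeval_eq (A := MvPolynomial (Fin 2) ℝ) (a := u) G
    have c1G := (pderiv (1 : Fin 2)).comp_aeval_eq (A := MvPolynomial (Fin 2) ℝ) (a := u) G
    rw [hd0u] at c0F c0G
    rw [hd1u] at c1F c1G
    simp only [smul_eq_mul] at c0F c1F c0G c1G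
    simp only [Jac, hf, hg, Derivation.leibniz, pderiv_X_self, pderiv_X_of_ne (by decide : (1:Fin 2) ≠ 0), pderiv_X_of_ne (by decide : (0:Fin 2) ≠ 1), c0F, c1F, c0G, c1G, smul_eq_mul, hRdef]
    simp only [Polynomial.derivative_mul, Polynomial.derivative_X, map_add, map_mul, map_one, Polynomial.aeval_X, hu]
    ring
  have evalJac : ∀ x y : ℝ, eval ![x, y] (Jac f g)
      = (Polynomial.derivative R).eval (x * y) := by
    intro x y
    rw [key]
    rw [show (Polynomial.aeval u (Polynomial.derivative R) : MvPolynomial (Fin 2) ℝ)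
        = Polynomial.eval₂ MvPolynomial.C u (Polynomial.derivative R) from rfl]
    rw [Polynomial.eval₂] at *
    simp [eval, hu, Polynomial.eval, Polynomial.eval₂, Polynomial.sum, map_sum, - Polynomial.eval₂_id]
  have h0 : R.eval 0 = 0 := by simp [hRdef]
  have ht : R.eval t₀ = 0 := by simp [hRdef, hroot]
  obtain ⟨⟨tp, htp⟩, ⟨tn, htn⟩⟩ := deriv_signs R hR (Ne.symm ht₀) h0 ht
  exact ⟨⟨![tp, 1], by rw [evalJac]; simpa using htp⟩,
         ⟨![tn, 1], by rw [evalJac]; simpa using htn⟩⟩
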